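/- Let X and Q be Hilbert spaces, a : X × X → ℝ a bounded symmetric bilinear form that is nonnegative (a(u,u) ≥ 0) and coercive on ker b (a(u,u) ≥ α‖u‖² for all u ∈ ker b), and b : X × Q → ℝ a bounded bilinear form satisfying the inf-sup condition for {X, Q}. Then for every pair of bounded linear functionals f ∈ X*, g ∈ Q*, the saddle point problem: find (u,p) ∈ X × Q with a(u,v) − b(v,p) = f(v) for all v ∈ X and b(u,q) = g(q) for all q ∈ Q, has a unique solution. -/

import Mathlib

set_option maxHeartbeats 1000000

open InnerProductSpace ContinuousLinearMap RealInnerProductSpace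

/-- Brezzi's theorem: if `a` is bounded, symmetric, nonnegative and coercive on
`ker b`, and `b` satisfies the inf-sup condition for `{X,Q}`, then for every
`f ∈ X*`, `g ∈ Q*` the saddle point problem has a unique solution. -/
theorem stmt2
    {X Q : Type*} [NormedAddCommGroup X] [InnerProductSpace ℝ X] [CompleteSpace X]
    [NormedAddCommGroup Q] [InnerProductSpace ℝ Q] [CompleteSpace Q]
    (a : X →L[ℝ] X →L[ℝ] ℝ) (b : X →L[ℝ] Q →L[ℝ] ℝ)
    (hsymm : ∀ u v : X, a u v = a v u)
    (hnonneg : ∀ u : X, 0 ≤ a u u)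
    (α : ℝ) (hα : 0 < α)
    (hcoer : ∀ u : X, (∀ q : Q, b u q = 0) → α * ‖u‖ ^ 2 ≤ a u u)
    (β : ℝ) (hβ : 0 < β)
    (hinfsup : ∀ q : Q, β * ‖q‖ ≤ ⨆ v : {v : X // v ≠ 0}, b v.1 q / ‖v.1‖)
    (f : X →L[ℝ] ℝ) (g : Q →L[ℝ] ℝ) :
    ∃! up : X × Q, (∀ v : X, a up.1 v - b v up.2 = f v) ∧ (∀ q : Q, b up.1 q = g q) := by
  classical
  -- Riesz representation of `b` in the second argument: `B : X →L Q` with `⟪B u, q⟫ = b u q`.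
  set B : X →L[ℝ] Q :=
    ((InnerProductSpace.toDual ℝ Q).symm.toContinuousLinearEquiv.toContinuousLinearMap).comp b
    with hBdef
  have hB : ∀ (u : X) (q : Q), ⟪B u, q⟫_ℝ = b u q := by
    intro u q
    simp [hBdef, InnerProductSpace.toDual_symm_apply]
  -- the adjoint
  set Bt : Q →L[ℝ] X := ContinuousLinearMap.adjoint B with hBtdef
  have hBt : ∀ (v : X) (q : Q), ⟪v, Bt q⟫_ℝ = b v q := by
    intro v q
    rw [hBtdef, ContinuousLinearMap.adjoint_inner_right, hB]
  -- `Bt` is bounded below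
  have hlow : ∀ q : Q, β * ‖q‖ ≤ ‖Bt q‖ := by
    intro q
    refine (hinfsup q).trans ?_
    rcases isEmpty_or_nonempty {v : X // v ≠ 0} with h | h
    · rw [Real.iSup_of_isEmpty]; positivity
    · refine ciSup_le fun v => ?_
      have hv : (0:ℝ) < ‖v.1‖ := norm_pos_iff.mpr v.2
      rw [div_le_iff₀ hv, ← hBt]
      calc ⟪v.1, Bt q⟫_ℝ ≤ ‖v.1‖ * ‖Bt q‖ := real_inner_le_norm _ _
        _ = ‖Bt q‖ * ‖v.1‖ := mul_comm _ _
  -- Coercivity of `q ↦ b (Bt q) q'` and Lax–Milgram for it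
  have hc : IsCoercive (b.comp Bt) := by
    refine ⟨β * β, by positivity, fun q => ?_⟩
    have h1 : b (Bt q) q = ‖Bt q‖ ^ 2 := by
      rw [← hBt, real_inner_self_eq_norm_sq]
    have := mul_le_mul (hlow q) (hlow q) (by positivity) (norm_nonneg _)
    calc β * β * ‖q‖ * ‖q‖ = (β * ‖q‖) * (β * ‖q‖) := by ring
      _ ≤ ‖Bt q‖ * ‖Bt q‖ := this
      _ = b (Bt q) q := by rw [h1]; ring
  set E : Q ≃L[ℝ] Q := hc.continuousLinearEquivOfBilin with hEdef
  have hE : ∀ q q' : Q, ⟪E q, q'⟫_ℝ = b (Bt q) q' := fun q q' =>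
    hc.continuousLinearEquivOfBilin_apply q q'
  have hEB : ∀ q : Q, E q = B (Bt q) := by
    intro q
    apply ext_inner_right ℝ
    intro q'
    rw [hE, hB]
  -- membership in ker B
  have hker : ∀ u : X, (∀ q : Q, b u q = 0) ↔ B u = 0 := by
    intro u
    constructor
    · intro h
      apply ext_inner_right ℝ
      intro q; rw [hB, h]; simp
    · intro h q; rw [← hB, h]; simp
  -- orthogonality of range Bt to ker B
  have hBtperp : ∀ (q : Q) (k : X), B k = 0 → ⟪Bt q, k⟫_ℝ = 0 := by
    intro q k hk
    rw [real_inner_comm, hBt, ← hB, hk]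
    simp
  -- elements orthogonal to ker B are in range of Bt
  have hrange : ∀ x : X, (∀ k : X, B k = 0 → ⟪x, k⟫_ℝ = 0) → ∃ p : Q, Bt p = x := by
    intro x hx
    refine ⟨E.symm (B x), ?_⟩
    have h1 : B (Bt (E.symm (B x))) = B x := by
      rw [← hEB]; exact E.apply_symm_apply (B x)
    have hdk : B (x - Bt (E.symm (B x))) = 0 := by simp [h1]
    have e1 : ⟪x, x - Bt (E.symm (B x))⟫_ℝ = 0 := hx _ hdk
    have e2 : ⟪Bt (E.symm (B x)), x - Bt (E.symm (B x))⟫_ℝ = 0 := hBtperp _ _ hdk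
    have h3 : ⟪x - Bt (E.symm (B x)), x - Bt (E.symm (B x))⟫_ℝ = 0 := by
      rw [inner_sub_left, e1, e2]; ring
    have h4 : x - Bt (E.symm (B x)) = 0 := by rwa [inner_self_eq_zero] at h3
    have := sub_eq_zero.mp h4
    exact this.symm
  -- the kernel as a complete subspace
  set K : Submodule ℝ X := LinearMap.ker (B : X →ₗ[ℝ] Q) with hKdef
  haveI : CompleteSpace K := (ContinuousLinearMap.isClosed_ker B).completeSpace_coe
  set S : K →L[ℝ] X := K.subtypeL with hSdef
  -- restricted bilinear form on K
  set aK : K →L[ℝ] K →L[ℝ] ℝ := ((a.comp S).flip.comp S).flip with haKdef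
  have haK : ∀ u v : K, aK u v = a (u : X) (v : X) := by intro u v; rfl
  have hcK : IsCoercive aK := by
    refine ⟨α, hα, fun u => ?_⟩
    have hu : (u : X) ∈ K := u.2
    have hu' : ∀ q : Q, b (u : X) q = 0 := (hker _).mpr hu
    have := hcoer (u : X) hu'
    rw [haK]
    calc α * ‖u‖ * ‖u‖ = α * ‖(u:X)‖ ^ 2 := by
          rw [Submodule.norm_coe]; ring
      _ ≤ a (u:X) (u:X) := this
  set LM : K ≃L[ℝ] K := hcK.continuousLinearEquivOfBilin with hLMdef
  have hLM : ∀ u v : K, ⟪LM u, v⟫_ℝ = aK u v := fun u v =>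
    hcK.continuousLinearEquivOfBilin_apply u v
  -- construct ug with B ug = Riesz g
  set gs : Q := (InnerProductSpace.toDual ℝ Q).symm g with hgs
  have hgs' : ∀ q : Q, ⟪gs, q⟫_ℝ = g q := fun q =>
    InnerProductSpace.toDual_symm_apply
  set ug : X := Bt (E.symm gs) with hug
  have hBug : B ug = gs := by rw [hug, ← hEB]; exact E.apply_symm_apply gs
  have hbug : ∀ q : Q, b ug q = g q := by
    intro q; rw [← hB, hBug, hgs' q]
  -- solve on K
  set ℓ₁ : K →L[ℝ] ℝ := (f - a ug).comp S with hl1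
  have hl1' : ∀ v : K, ℓ₁ v = f (v : X) - a ug (v : X) := fun v => rfl
  set u0 : K := LM.symm ((InnerProductSpace.toDual ℝ K).symm ℓ₁) with hu0
  have hu0' : ∀ v : K, aK u0 v = ℓ₁ v := by
    intro v
    rw [← hLM, hu0]
    rw [ContinuousLinearEquiv.apply_symm_apply]
    exact InnerProductSpace.toDual_symm_apply
  set u : X := ug + (u0 : X) with huu
  -- residual functional
  set ℓ : X →L[ℝ] ℝ := a u - f with hl
  have hlK : ∀ k : X, B k = 0 → ℓ k = 0 := by
    intro k hk
    have hkK : k ∈ K := hk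
    have := hu0' ⟨k, hkK⟩
    rw [haK, hl1'] at this
    simp only [hl, huu]
    simp only [ContinuousLinearMap.sub_apply, map_add, ContinuousLinearMap.add_apply]
    simp only [Submodule.coe_mk] at this ⊢
    rw [this]
    ring
  set ls : X := (InnerProductSpace.toDual ℝ X).symm ℓ with hls
  have hls' : ∀ v : X, ⟪ls, v⟫_ℝ = ℓ v := fun v => InnerProductSpace.toDual_symm_apply
  obtain ⟨p, hp⟩ := hrange ls (fun k hk => by rw [hls' k, hlK k hk])
  have hbp : ∀ v : X, b v p = a u v - f v := by
    intro v
    rw [← hBt, hp, real_inner_comm, hls' v]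
    rfl
  have hBu0 : B (u0 : X) = 0 := u0.2
  clear_value B Bt E K S aK LM gs ug ℓ₁ u0 u ℓ ls
  refine ⟨(u, p), ⟨?_, ?_⟩, ?_⟩
  · intro v; rw [hbp v]; ring
  · intro q
    rw [← hB, huu, map_add, hBu0, add_zero, hBug, hgs' q]
  · rintro ⟨u', p'⟩ ⟨h1, h2⟩
    -- uniqueness
    have hw : ∀ q : Q, b (u' - u) q = 0 := by
      intro q
      have : b u q = g q := by rw [← hB, huu, map_add, hBu0, add_zero, hBug, hgs' q]
      simp [map_sub, h2 q, this]
    have hr : ∀ v : X, a (u' - u) v = b v (p' - p) := by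
      intro v
      have e1 := h1 v
      have e2 : a u v - b v p = f v := by rw [hbp v]; ring
      have : a u' v - a u v = b v p' - b v p := by linarith
      simpa [map_sub, ContinuousLinearMap.sub_apply] using this
    have hww : u' - u = 0 := by
      have h0 : a (u' - u) (u' - u) = 0 := by
        rw [hr (u' - u)]
        have : (∀ q, b (u' - u) q = 0) := hw
        rw [← hB, (hker _).mp this]
        simp
      have h5 := hcoer (u' - u) hw
      rw [h0] at h5
      have h6 : ‖u' - u‖ ^ 2 ≤ 0 :=
        le_of_mul_le_mul_left (by simpa using h5) hα
      have h8 : ‖u' - u‖ ^ 2 = 0 := le_antisymm h6 (sq_nonneg _)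
      have h9 : ‖u' - u‖ = 0 := by
        have := sq_eq_zero_iff.mp h8
        exact this
      exact norm_eq_zero.mp h9
    have hpp : p' - p = 0 := by
      have hb0 : ∀ v : X, b v (p' - p) = 0 := by
        intro v; rw [← hr v, hww]; simp
      have : Bt (p' - p) = 0 := by
        apply ext_inner_right ℝ
        intro v
        rw [real_inner_comm, hBt, hb0 v]; simp
      have h2 : β * ‖p' - p‖ ≤ 0 := by
        have h3 := hlow (p' - p); rwa [this, norm_zero] at h3
      have h4 : ‖p' - p‖ ≤ 0 :=
        le_of_mul_le_mul_left (by simpa using h2) hβ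
      exact norm_eq_zero.mp (le_antisymm h4 (norm_nonneg _))
    have hu'' : u' = u := by rwa [sub_eq_zero] at hww
    have hp'' : p' = p := by rwa [sub_eq_zero] at hpp
    exact Prod.ext hu'' hp''
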